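/- Let C be a [d+3, 4, d] MDS code over F_q with d ≥ 3. Then the number of codewords with 3-weight equal to the full length d+3 is A^3(d+3) = q^4 - (d+3)q + d + 2. -/

import Mathlib

/-- The cyclic `b`-weight of `x : ZMod n → F`. -/
noncomputable def wtb {F : Type*} [Zero F] {n : ℕ} (b : ℕ) (x : ZMod n → F) : ℕ :=
  Nat.card {i : ZMod n // ∃ j < b, x (i + (j : ZMod n)) ≠ 0}

/-- For a `[d+3, 4, d]` MDS code `C` over `F_q` with `d ≥ 3`, the number of
codewords with full `3`-weight `d+3` is `q^4 - (d+3)q + d + 2`. -/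
theorem mds_three_weight_full
    {F : Type*} [Field F] [Fintype F] [DecidableEq F]
    (d : ℕ) (hd : 3 ≤ d) [NeZero (d + 3)]
    (C : Submodule F (ZMod (d + 3) → F))
    (hk : Module.finrank F C = 4)
    (hmin : ∀ c ∈ C, c ≠ 0 → d ≤ hammingNorm c)
    (hex : ∃ c ∈ C, c ≠ 0 ∧ hammingNorm c = d) :
    (Nat.card {c : C // wtb 3 (c : ZMod (d + 3) → F) = d + 3} : ℤ) =
      (Fintype.card F : ℤ) ^ 4 - (d + 3) * (Fintype.card F : ℤ) + d + 2 := by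
  classical
  have hq2 : 2 ≤ Fintype.card F := Fintype.one_lt_card
  have hcardZ : Fintype.card (ZMod (d + 3)) = d + 3 := ZMod.card (d + 3)
  haveI : Fintype C := Fintype.ofFinite _
  -- cast injectivity for small naturals
  have hcast : ∀ a b : ℕ, a < d + 3 → b < d + 3 →
      (a : ZMod (d + 3)) = (b : ZMod (d + 3)) → a = b := by
    intro a b ha hb h
    have := congrArg ZMod.val h
    rwa [ZMod.val_cast_of_lt ha, ZMod.val_cast_of_lt hb] at this
  have hshift : ∀ (i : ZMod (d + 3)) (a b : ℕ), a < d + 3 → b < d + 3 →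
      i + (a : ZMod (d + 3)) = i + (b : ZMod (d + 3)) → a = b := by
    intro i a b ha hb h
    exact hcast a b ha hb (add_left_cancel h)
  -- key: a codeword with 4 distinct zeros is zero
  have key : ∀ c ∈ C, ∀ s : Finset (ZMod (d + 3)), 4 ≤ s.card →
      (∀ i ∈ s, c i = 0) → c = 0 := by
    intro c hc s hs hz
    by_contra hne
    have hd' := hmin c hc hne
    have hdisj : Disjoint ({i | c i ≠ 0} : Finset (ZMod (d + 3))) s := by
      rw [Finset.disjoint_left]
      intro a ha has
      simp only [Finset.mem_filter] at ha
      exact ha.2 (hz a has)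
    have hle := Finset.card_le_univ (({i | c i ≠ 0} : Finset (ZMod (d + 3))) ∪ s)
    rw [Finset.card_union_of_disjoint hdisj, hcardZ] at hle
    have hnorm : hammingNorm c = ({i | c i ≠ 0} : Finset (ZMod (d + 3))).card := rfl
    omega
  -- the window of i together with any x outside is a 4-element set
  have hwin4 : ∀ i x : ZMod (d + 3), (∀ a : ℕ, a < 3 → x ≠ i + (a : ZMod (d + 3))) →
      ({i, i + ((1 : ℕ) : ZMod (d + 3)), i + ((2 : ℕ) : ZMod (d + 3)), x} :
        Finset (ZMod (d + 3))).card = 4 := by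
    intro i x hx
    rw [Finset.card_insert_of_notMem, Finset.card_insert_of_notMem,
      Finset.card_insert_of_notMem, Finset.card_singleton]
    · simp only [Finset.mem_singleton]
      exact fun h => hx 2 (by norm_num) h.symm
    · simp only [Finset.mem_insert, Finset.mem_singleton]
      push_neg
      refine ⟨fun h => ?_, fun h => hx 1 (by norm_num) h.symm⟩
      have := hshift i 1 2 (by omega) (by omega) h
      omega
    · simp only [Finset.mem_insert, Finset.mem_singleton]
      push_neg
      refine ⟨fun h => ?_, fun h => ?_, fun h => hx 0 (by norm_num) (by rw [← h]; simp)⟩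
      · have := hshift i 0 1 (by omega) (by omega) (by simpa using h)
        omega
      · have := hshift i 0 2 (by omega) (by omega) (by simpa using h)
        omega
  -- if c ∈ C vanishes on two distinct windows, c = 0
  have key2 : ∀ c ∈ C, ∀ i j : ZMod (d + 3), i ≠ j →
      (∀ a : ℕ, a < 3 → c (i + (a : ZMod (d + 3))) = 0) →
      (∀ a : ℕ, a < 3 → c (j + (a : ZMod (d + 3))) = 0) → c = 0 := by
    intro c hc i j hij hi hj
    have hex4 : ∃ x : ZMod (d + 3), c x = 0 ∧
        ∀ a : ℕ, a < 3 → x ≠ i + (a : ZMod (d + 3)) := by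
      by_contra hcon
      push_neg at hcon
      have hsub : ∀ b : ℕ, b < 3 →
          ∃ a : ℕ, a < 3 ∧ j + (b : ZMod (d + 3)) = i + (a : ZMod (d + 3)) := by
        intro b hb
        obtain ⟨a, ha, h⟩ := hcon (j + (b : ZMod (d + 3))) (hj b hb)
        exact ⟨a, ha, h⟩
      obtain ⟨a0, ha0, h0⟩ := hsub 0 (by norm_num)
      have hj0 : j = i + (a0 : ZMod (d + 3)) := by simpa using h0
      have ha0ne : a0 ≠ 0 := by
        intro h; apply hij; rw [hj0, h]; simp
      obtain ⟨b1, hb1, h1⟩ := hsub (3 - a0) (by omega)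
      rw [hj0, add_assoc, ← Nat.cast_add] at h1
      have h3 : a0 + (3 - a0) = 3 := by omega
      rw [h3] at h1
      have := hshift i 3 b1 (by omega) (by omega) h1
      omega
    obtain ⟨x, hx0, hxn⟩ := hex4
    refine key c hc {i, i + ((1 : ℕ) : ZMod (d + 3)), i + ((2 : ℕ) : ZMod (d + 3)), x}
      (le_of_eq (hwin4 i x hxn).symm) ?_
    intro y hy
    simp only [Finset.mem_insert, Finset.mem_singleton] at hy
    rcases hy with h | h | h | h
    · rw [h]; simpa using hi 0 (by norm_num)
    · rw [h]; exact hi 1 (by norm_num)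
    · rw [h]; exact hi 2 (by norm_num)
    · rw [h]; exact hx0
  -- the linear map reading the window at i
  let L : ZMod (d + 3) → (C →ₗ[F] (Fin 3 → F)) := fun i =>
    { toFun := fun c => fun a => (c : ZMod (d + 3) → F) (i + ((a : ℕ) : ZMod (d + 3)))
      map_add' := by intro c c'; ext a; simp
      map_smul' := by intro r c; ext a; simp }
  have hmemL : ∀ (i : ZMod (d + 3)) (c : C), L i c = 0 ↔
      ∀ a : ℕ, a < 3 → (c : ZMod (d + 3) → F) (i + (a : ZMod (d + 3))) = 0 := by
    intro i c
    constructor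
    · intro h a ha
      have := congrFun h ⟨a, ha⟩
      simpa [L] using this
    · intro h
      ext a
      simpa [L] using h a a.2
  have hcardC : Fintype.card C = Fintype.card F ^ 4 := by
    rw [Module.card_eq_pow_finrank (K := F) (V := C), hk]
  -- cardinality of each window kernel is q
  have hker : ∀ i : ZMod (d + 3),
      Fintype.card (LinearMap.ker (L i)) = Fintype.card F := by
    intro i
    have h1 : Fintype.card (LinearMap.ker (L i)) =
        Fintype.card F ^ Module.finrank F (LinearMap.ker (L i)) :=
      Module.card_eq_pow_finrank (K := F) (V := LinearMap.ker (L i))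
    have hrk : 1 ≤ Module.finrank F (LinearMap.ker (L i)) := by
      have hrn := LinearMap.finrank_range_add_finrank_ker (L i)
      have h2 : Module.finrank F (LinearMap.range (L i)) ≤ 3 := by
        have := Submodule.finrank_le (LinearMap.range (L i))
        simpa [Module.finrank_pi] using this
      omega
    have hle : Fintype.card (LinearMap.ker (L i)) ≤ Fintype.card F := by
      have hinj : Function.Injective
          (fun c : LinearMap.ker (L i) =>
            ((c : C) : ZMod (d + 3) → F) (i + ((3 : ℕ) : ZMod (d + 3)))) := by
        intro c c' h
        have h' : ((c : C) : ZMod (d + 3) → F) (i + ((3 : ℕ) : ZMod (d + 3)))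
            = ((c' : C) : ZMod (d + 3) → F) (i + ((3 : ℕ) : ZMod (d + 3))) := h
        have hdiff : (((c : C) - (c' : C) : C) : ZMod (d + 3) → F) = 0 := by
          have hker' : ∀ a : ℕ, a < 3 →
              (((c : C) - (c' : C) : C) : ZMod (d + 3) → F)
                (i + (a : ZMod (d + 3))) = 0 := by
            have hm : L i ((c : C) - (c' : C)) = 0 := by
              rw [map_sub, (LinearMap.mem_ker.mp c.2), (LinearMap.mem_ker.mp c'.2), sub_zero]
            exact (hmemL i _).mp hm
          refine key _ ((c : C) - (c' : C)).2
            {i, i + ((1 : ℕ) : ZMod (d + 3)), i + ((2 : ℕ) : ZMod (d + 3)),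
              i + ((3 : ℕ) : ZMod (d + 3))}
            (le_of_eq (hwin4 i _ ?_).symm) ?_
          · intro a ha h3
            have := hshift i 3 a (by omega) (by omega) h3
            omega
          · intro y hy
            simp only [Finset.mem_insert, Finset.mem_singleton] at hy
            rcases hy with hy | hy | hy | hy
            · rw [hy]; simpa using hker' 0 (by norm_num)
            · rw [hy]; exact hker' 1 (by norm_num)
            · rw [hy]; exact hker' 2 (by norm_num)
            · rw [hy]
              show (((c : C) : ZMod (d + 3) → F) - ((c' : C) : ZMod (d + 3) → F))
                (i + ((3 : ℕ) : ZMod (d + 3))) = 0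
              rw [Pi.sub_apply, h', sub_self]
        have h0 : ((c : C) - (c' : C) : C) = 0 := Subtype.ext hdiff
        exact Subtype.ext (sub_eq_zero.mp h0)
      exact Fintype.card_le_of_injective _ hinj
    have hge : Fintype.card F ≤ Fintype.card (LinearMap.ker (L i)) := by
      rw [h1]
      exact Nat.le_self_pow (by omega) _
    omega
  -- the bad set: codewords vanishing on some window
  set Bad : Finset C := Finset.univ.filter
    (fun c : C => ∃ i : ZMod (d + 3), ∀ a : ℕ, a < 3 →
      (c : ZMod (d + 3) → F) (i + (a : ZMod (d + 3))) = 0) with hBad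
  set S : ZMod (d + 3) → Finset C := fun i =>
    Finset.univ.filter (fun c : C => L i c = 0) with hS
  have hScard : ∀ i, (S i).card = Fintype.card F := by
    intro i
    calc (S i).card = Fintype.card {c : C // L i c = 0} := (Fintype.card_subtype _).symm
      _ = Fintype.card (LinearMap.ker (L i)) :=
          Fintype.card_congr (Equiv.subtypeEquivRight fun c => LinearMap.mem_ker.symm)
      _ = Fintype.card F := hker i
  have h0S : ∀ i, (0 : C) ∈ S i := by
    intro i
    exact Finset.mem_filter.mpr ⟨Finset.mem_univ _, map_zero (L i)⟩
  have hSdisj : ∀ i ∈ (Finset.univ : Finset (ZMod (d + 3))),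
      ∀ j ∈ (Finset.univ : Finset (ZMod (d + 3))), i ≠ j →
      Disjoint ((S i).erase 0) ((S j).erase 0) := by
    intro i _ j _ hij
    rw [Finset.disjoint_left]
    intro c hci hcj
    rw [Finset.mem_erase, hS, Finset.mem_filter] at hci hcj
    apply hci.1
    have hz : (c : ZMod (d + 3) → F) = 0 :=
      key2 _ c.2 i j hij ((hmemL i c).mp hci.2.2) ((hmemL j c).mp hcj.2.2)
    exact Subtype.ext hz
  have hBadEq : Bad = insert (0 : C)
      (Finset.univ.biUnion fun i => (S i).erase 0) := by
    ext c
    constructor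
    · intro hc
      rw [hBad, Finset.mem_filter] at hc
      obtain ⟨-, i, hi⟩ := hc
      rw [Finset.mem_insert]
      by_cases hc0 : c = 0
      · exact Or.inl hc0
      · refine Or.inr ?_
        rw [Finset.mem_biUnion]
        exact ⟨i, Finset.mem_univ i, Finset.mem_erase.mpr
          ⟨hc0, Finset.mem_filter.mpr ⟨Finset.mem_univ c, (hmemL i c).mpr hi⟩⟩⟩
    · intro hc
      rw [Finset.mem_insert] at hc
      rw [hBad, Finset.mem_filter]
      refine ⟨Finset.mem_univ c, ?_⟩
      rcases hc with hc0 | hc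
      · refine ⟨0, fun a _ => ?_⟩
        rw [hc0]
        simp
      · rw [Finset.mem_biUnion] at hc
        obtain ⟨i, -, hi⟩ := hc
        exact ⟨i, (hmemL i c).mp (Finset.mem_filter.mp (Finset.mem_erase.mp hi).2).2⟩
  have hBadCard : Bad.card = 1 + (d + 3) * (Fintype.card F - 1) := by
    rw [hBadEq, Finset.card_insert_of_notMem (by simp), Finset.card_biUnion hSdisj]
    have : ∀ i ∈ (Finset.univ : Finset (ZMod (d + 3))),
        ((S i).erase 0).card = Fintype.card F - 1 := by
      intro i _
      rw [Finset.card_erase_of_mem (h0S i), hScard i]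
    rw [Finset.sum_congr rfl this, Finset.sum_const, Finset.card_univ, hcardZ, smul_eq_mul]
    omega
  -- characterization of full 3-weight
  have hwtb : ∀ x : ZMod (d + 3) → F, wtb 3 x = d + 3 ↔
      ¬ ∃ i : ZMod (d + 3), ∀ a : ℕ, a < 3 → x (i + (a : ZMod (d + 3))) = 0 := by
    intro x
    rw [wtb, Nat.card_eq_fintype_card, Fintype.card_subtype]
    constructor
    · intro h hcon
      obtain ⟨i, hi⟩ := hcon
      have huniv := Finset.eq_univ_of_card _ (by rw [h, hcardZ])
      have hmem := (Finset.mem_filter.mp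
        (by rw [huniv]; exact Finset.mem_univ i)).2
      obtain ⟨j, hj, hne⟩ := hmem
      exact hne (hi j hj)
    · intro h
      rw [Finset.filter_true_of_mem, Finset.card_univ, hcardZ]
      intro i _
      by_contra hcon
      push_neg at hcon
      exact h ⟨i, fun a ha => hcon a ha⟩
  -- counting the good set
  set G : ℕ := Nat.card {c : C // wtb 3 (c : ZMod (d + 3) → F) = d + 3} with hG
  have hGcard : G = (Finset.univ.filter
      (fun c : C => wtb 3 (c : ZMod (d + 3) → F) = d + 3)).card := by
    rw [hG, Nat.card_eq_fintype_card, Fintype.card_subtype]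
  have hfilter : (Finset.univ.filter
      (fun c : C => wtb 3 (c : ZMod (d + 3) → F) = d + 3)) =
      (Finset.univ.filter (fun c : C => ¬ ∃ i : ZMod (d + 3), ∀ a : ℕ, a < 3 →
        (c : ZMod (d + 3) → F) (i + (a : ZMod (d + 3))) = 0)) := by
    apply Finset.filter_congr
    intro c _
    exact hwtb (c : ZMod (d + 3) → F)
  have hsum : Bad.card + G = Fintype.card F ^ 4 := by
    rw [hGcard, hfilter, hBad, ← hcardC, ← Finset.card_univ]
    exact Finset.card_filter_add_card_filter_not _
  -- final arithmetic
  obtain ⟨e, he⟩ : ∃ e, Fintype.card F = e + 1 := ⟨Fintype.card F - 1, by omega⟩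
  have hBZ : Bad.card = 1 + (d + 3) * e := by rw [hBadCard, he, Nat.add_sub_cancel]
  have hcast2 : (G : ℤ) + (1 + (d + 3) * e) = ((e : ℤ) + 1) ^ 4 := by
    have : G + (1 + (d + 3) * e) = (e + 1) ^ 4 := by
      rw [← hBZ, Nat.add_comm, hsum, he]
    exact_mod_cast congrArg (fun t : ℕ => (t : ℤ)) this
  have hge : (Fintype.card F : ℤ) = (e : ℤ) + 1 := by exact_mod_cast he
  rw [hge]
  linear_combination hcast2
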